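/- Let G be a finite connected simple graph, let e be an edge of G, and let G' be the subdivision of G at e with new edges e₁ and e₂. Then in the polynomial ring ℤ[x_f : f ∈ E(G')] the first Symanzik polynomial of G' equals the image of the first Symanzik polynomial of G under the ring homomorphism ℤ[x_f : f ∈ E(G)] → ℤ[x_f : f ∈ E(G')] which sends x_e to x_{e₁} + x_{e₂} and sends x_f to x_f for every edge f ≠ e; that is, Ψ_{G'} is obtained from Ψ_G by substituting x_{e₁} + x_{e₂} for x_e. -/

import Mathlib

open SimpleGraph MvPolynomial
open scoped Classical

/-- Transfer reachability along a vertex map turning adjacencies into reachabilities. -/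
lemma reach_transfer {A B : Type*} {H : SimpleGraph A} {K : SimpleGraph B} (p : A → B)
    (hp : ∀ x y, H.Adj x y → K.Reachable (p x) (p y)) {a b : A} (h : H.Reachable a b) :
    K.Reachable (p a) (p b) := by
  obtain ⟨w⟩ := h
  induction w with
  | nil => exact Reachable.refl _
  | cons h _ ih => exact (hp _ _ h).trans ih

lemma exists_delete {W : Type*} (H : SimpleGraph W) (hc : H.Connected) (hnac : ¬ H.IsAcyclic) :
    ∃ f ∈ H.edgeSet, (H.deleteEdges {f}).Connected := by
  rw [isAcyclic_iff_forall_adj_isBridge] at hnac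
  push_neg at hnac
  obtain ⟨a, b, hab, hbr⟩ := hnac
  rw [isBridge_iff] at hbr
  push_neg at hbr
  have hreach : (H \ fromEdgeSet {s(a, b)}).Reachable a b := hbr
  refine ⟨s(a, b), hab, ?_⟩
  have : (H.deleteEdges {s(a,b)}) = H \ fromEdgeSet {s(a,b)} := rfl
  rw [this]
  haveI := hc.nonempty
  refine Connected.mk fun x y => ?_
  have := reach_transfer (H := H) (K := H \ fromEdgeSet {s(a,b)}) id ?_ (hc.preconnected x y)
  · exact this
  · intro x y hxy
    by_cases hfe : s(x, y) = s(a, b)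
    · rw [Sym2.eq_iff] at hfe
      rcases hfe with ⟨rfl, rfl⟩ | ⟨rfl, rfl⟩
      · exact hreach
      · exact hreach.symm
    · exact Adj.reachable (by simp [sdiff_adj, hxy, hfe])

lemma conn_card_le {W : Type*} [Fintype W] :
    ∀ (n : ℕ) (H : SimpleGraph W) [Fintype H.edgeSet], H.edgeFinset.card = n →
      H.Connected → Fintype.card W ≤ n + 1 := by
  intro n
  induction n using Nat.strong_induction_on with
  | _ n ih =>
    intro H _ hcard hconn
    by_cases hac : H.IsAcyclic
    · have ht : H.IsTree := ⟨hconn, hac⟩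
      rw [← ht.card_edgeFinset, hcard]
    · obtain ⟨f, hf, hconn'⟩ := exists_delete H hconn hac
      haveI : Fintype (H.deleteEdges {f}).edgeSet := Fintype.ofFinite _
      have hsub : (H.deleteEdges {f}).edgeFinset = H.edgeFinset.erase f := by
        ext g
        simp [edgeSet_deleteEdges, mem_edgeFinset, Finset.mem_erase, and_comm]
      have hlt : (H.deleteEdges {f}).edgeFinset.card < n := by
        rw [hsub, Finset.card_erase_of_mem (by rwa [mem_edgeFinset]), hcard]
        have : 0 < n := by
          rw [← hcard]; exact Finset.card_pos.2 ⟨f, by rwa [mem_edgeFinset]⟩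
        omega
      have := ih _ hlt (H.deleteEdges {f}) rfl hconn'
      omega

lemma isTree_iff_card {W : Type*} [Fintype W] (H : SimpleGraph W) [Fintype H.edgeSet] :
    H.IsTree ↔ H.Connected ∧ H.edgeFinset.card + 1 = Fintype.card W := by
  constructor
  · intro ht
    exact ⟨ht.isConnected, ht.card_edgeFinset⟩
  · rintro ⟨hconn, hcard⟩
    refine ⟨hconn, ?_⟩
    by_contra hac
    obtain ⟨f, hf, hconn'⟩ := exists_delete H hconn hac
    haveI : Fintype (H.deleteEdges {f}).edgeSet := Fintype.ofFinite _
    have hsub : (H.deleteEdges {f}).edgeFinset = H.edgeFinset.erase f := by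
      ext g
      simp [edgeSet_deleteEdges, mem_edgeFinset, Finset.mem_erase, and_comm]
    have hle := conn_card_le _ (H.deleteEdges {f}) rfl hconn'
    rw [hsub, Finset.card_erase_of_mem (by rwa [mem_edgeFinset])] at hle
    have hpos : 0 < H.edgeFinset.card := Finset.card_pos.2 ⟨f, by rwa [mem_edgeFinset]⟩
    omega

variable {V : Type*}

/-- The subdivision of a simple graph `G` at the edge `e = {u, v}`: the graph on the vertex
set `V ⊕ Unit` (the extra vertex `w = Sum.inr ()` is the new vertex) whose edges are all edges
of `G` except `e`, together with the two new edges `e₁ = {u, w}` and `e₂ = {w, v}`. -/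
def subdiv (G : SimpleGraph V) (u v : V) : SimpleGraph (V ⊕ Unit) where
  Adj a b :=
    match a, b with
    | Sum.inl a, Sum.inl b => G.Adj a b ∧ s(a, b) ≠ s(u, v)
    | Sum.inl a, Sum.inr _ => a = u ∨ a = v
    | Sum.inr _, Sum.inl b => b = u ∨ b = v
    | Sum.inr _, Sum.inr _ => False
  symm := by
    refine ⟨?_⟩
    rintro (a | a) (b | b) h
    · exact ⟨h.1.symm, fun hc => h.2 (by rw [Sym2.eq_swap]; exact hc)⟩
    · exact h
    · exact h
    · exact h
  loopless := by
    refine ⟨?_⟩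
    rintro (a | a) h
    · exact G.irrefl h.1
    · exact h

/-- The first new edge `e₁ = {u, w}` of the subdivision. -/
def newE₁ (u : V) : Sym2 (V ⊕ Unit) := s(Sum.inl u, Sum.inr ())

/-- The second new edge `e₂ = {w, v}` of the subdivision. -/
def newE₂ (v : V) : Sym2 (V ⊕ Unit) := s(Sum.inr (), Sum.inl v)

lemma mE_inj : Function.Injective (Sym2.map (Sum.inl : V → V ⊕ Unit)) :=
  Sym2.map.injective Sum.inl_injective

lemma mE_ne_E1 (f : Sym2 V) (u : V) : Sym2.map Sum.inl f ≠ newE₁ u := by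
  induction f using Sym2.ind with
  | _ a b => simp [newE₁, Sym2.eq_iff]

lemma mE_ne_E2 (f : Sym2 V) (v : V) : Sym2.map Sum.inl f ≠ newE₂ v := by
  induction f using Sym2.ind with
  | _ a b => simp [newE₂, Sym2.eq_iff]

lemma E1_ne_E2 {u v : V} (h : u ≠ v) : newE₁ u ≠ newE₂ v := by
  simp [newE₁, newE₂, Sym2.eq_iff, h]

lemma subdiv_adj_inl_inl {G : SimpleGraph V} {u v a b : V} :
    (subdiv G u v).Adj (Sum.inl a) (Sum.inl b) ↔ G.Adj a b ∧ s(a, b) ≠ s(u, v) := Iff.rfl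

lemma subdiv_adj_inl_inr {G : SimpleGraph V} {u v a : V} {t : Unit} :
    (subdiv G u v).Adj (Sum.inl a) (Sum.inr t) ↔ a = u ∨ a = v := Iff.rfl

lemma edgeSet_subdiv (G : SimpleGraph V) (u v : V) :
    (subdiv G u v).edgeSet =
      (Sym2.map Sum.inl) '' (G.edgeSet \ {s(u, v)}) ∪ {newE₁ u, newE₂ v} := by
  ext g
  induction g using Sym2.ind with
  | _ x y =>
    rcases x with x | x <;> rcases y with y | y
    · simp only [mem_edgeSet, subdiv_adj_inl_inl, Set.mem_union, Set.mem_image,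
        Set.mem_diff, Set.mem_insert_iff, Set.mem_singleton_iff]
      constructor
      · rintro ⟨hadj, hne⟩
        exact Or.inl ⟨s(x, y), ⟨hadj, hne⟩, rfl⟩
      · rintro (⟨f, ⟨hf, hfe⟩, hfe2⟩ | h | h)
        · have hfxy : f = s(x, y) := mE_inj (by simpa using hfe2)
          subst hfxy
          exact ⟨hf, hfe⟩
        · exact absurd h (by simp [newE₁, Sym2.eq_iff])
        · exact absurd h (by simp [newE₂, Sym2.eq_iff])
    · simp only [mem_edgeSet, subdiv_adj_inl_inr, Set.mem_union, Set.mem_image,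
        Set.mem_diff, Set.mem_insert_iff, Set.mem_singleton_iff]
      constructor
      · rintro (rfl | rfl)
        · exact Or.inr (Or.inl (by simp [newE₁]))
        · exact Or.inr (Or.inr (by simp [newE₂, Sym2.eq_swap]))
      · rintro (⟨f, _, hfe⟩ | h | h)
        · exfalso
          induction f using Sym2.ind with
          | _ a b => simp [Sym2.eq_iff] at hfe
        · simp only [newE₁, Sym2.eq_iff, Sum.inl.injEq, Sum.inr.injEq, reduceCtorEq] at h
          tauto
        · simp only [newE₂, Sym2.eq_iff, Sum.inl.injEq, Sum.inr.injEq, reduceCtorEq] at h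
          tauto
    · rw [Sym2.eq_swap]
      simp only [mem_edgeSet]
      rw [adj_comm]
      simp only [mem_edgeSet, subdiv_adj_inl_inr, Set.mem_union, Set.mem_image,
        Set.mem_diff, Set.mem_insert_iff, Set.mem_singleton_iff]
      constructor
      · rintro (rfl | rfl)
        · exact Or.inr (Or.inl (by simp [newE₁]))
        · exact Or.inr (Or.inr (by simp [newE₂, Sym2.eq_swap]))
      · rintro (⟨f, _, hfe⟩ | h | h)
        · exfalso
          induction f using Sym2.ind with
          | _ a b => simp [Sym2.eq_iff] at hfe
        · simp only [newE₁, Sym2.eq_iff, Sum.inl.injEq, Sum.inr.injEq, reduceCtorEq] at h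
          tauto
        · simp only [newE₂, Sym2.eq_iff, Sum.inl.injEq, Sum.inr.injEq, reduceCtorEq] at h
          tauto
    · constructor
      · rintro h
        exact absurd h (by simp [subdiv, mem_edgeSet])
      · rintro (⟨f, _, hfe⟩ | h | h)
        · exfalso
          induction f using Sym2.ind with
          | _ a b => simp [Sym2.eq_iff] at hfe
        · simp [newE₁, Sym2.eq_iff] at h
        · simp [newE₂, Sym2.eq_iff] at h

noncomputable def phiA (u v : V) (s : Finset (Sym2 V)) : Finset (Sym2 (V ⊕ Unit)) :=
  (s.erase s(u, v)).image (Sym2.map Sum.inl) ∪ {newE₁ u, newE₂ v}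

noncomputable def phiB1 (u : V) (s : Finset (Sym2 V)) : Finset (Sym2 (V ⊕ Unit)) :=
  s.image (Sym2.map Sum.inl) ∪ {newE₁ u}

noncomputable def phiB2 (v : V) (s : Finset (Sym2 V)) : Finset (Sym2 (V ⊕ Unit)) :=
  s.image (Sym2.map Sum.inl) ∪ {newE₂ v}

lemma mem_phiA {u v : V} {s : Finset (Sym2 V)} {g : Sym2 (V ⊕ Unit)} :
    g ∈ phiA u v s ↔
      (∃ f, (f ∈ s ∧ f ≠ s(u, v)) ∧ Sym2.map Sum.inl f = g) ∨ g = newE₁ u ∨ g = newE₂ v := by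
  simp only [phiA, Finset.mem_union, Finset.mem_image, Finset.mem_erase, Finset.mem_insert,
    Finset.mem_singleton]
  aesop

lemma mem_phiB1 {u : V} {s : Finset (Sym2 V)} {g : Sym2 (V ⊕ Unit)} :
    g ∈ phiB1 u s ↔ (∃ f ∈ s, Sym2.map Sum.inl f = g) ∨ g = newE₁ u := by
  simp [phiB1]
  exact or_comm

lemma mem_phiB2 {v : V} {s : Finset (Sym2 V)} {g : Sym2 (V ⊕ Unit)} :
    g ∈ phiB2 v s ↔ (∃ f ∈ s, Sym2.map Sum.inl f = g) ∨ g = newE₂ v := by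
  simp [phiB2]
  exact or_comm

section Conn

variable {u v : V} {s : Finset (Sym2 V)}

lemma conn_a_up (huv : s(u, v) ∈ s)
    (hc : (fromEdgeSet (s : Set (Sym2 V))).Connected) :
    (fromEdgeSet ((phiA u v s : Finset (Sym2 (V ⊕ Unit))) : Set (Sym2 (V ⊕ Unit)))).Connected := by
  have hwu : (fromEdgeSet ((phiA u v s : Finset (Sym2 (V ⊕ Unit))) : Set (Sym2 (V ⊕ Unit)))).Adj
      (Sum.inl u) (Sum.inr ()) := by
    rw [fromEdgeSet_adj]
    exact ⟨Finset.mem_coe.2 (mem_phiA.2 (Or.inr (Or.inl rfl))), by simp⟩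
  have hwv : (fromEdgeSet ((phiA u v s : Finset (Sym2 (V ⊕ Unit))) : Set (Sym2 (V ⊕ Unit)))).Adj
      (Sum.inr ()) (Sum.inl v) := by
    rw [fromEdgeSet_adj]
    exact ⟨Finset.mem_coe.2 (mem_phiA.2 (Or.inr (Or.inr rfl))), by simp⟩
  have key : ∀ x y : V, (fromEdgeSet ((phiA u v s : Finset (Sym2 (V ⊕ Unit))) :
      Set (Sym2 (V ⊕ Unit)))).Reachable (Sum.inl x) (Sum.inl y) := by
    intro x y
    refine reach_transfer Sum.inl ?_ (hc.preconnected x y)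
    intro x y hxy
    rw [fromEdgeSet_adj] at hxy
    obtain ⟨hmem, hne⟩ := hxy
    by_cases hf : s(x, y) = s(u, v)
    · rcases Sym2.eq_iff.1 hf with ⟨rfl, rfl⟩ | ⟨rfl, rfl⟩
      · exact hwu.reachable.trans hwv.reachable
      · exact (hwu.reachable.trans hwv.reachable).symm
    · refine Adj.reachable ?_
      rw [fromEdgeSet_adj]
      exact ⟨Finset.mem_coe.2 (mem_phiA.2 (Or.inl ⟨s(x, y), ⟨hmem, hf⟩, rfl⟩)), by simp [hne]⟩
  refine Connected.mk ?_
  rintro (x | x) (y | y)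
  · exact key x y
  · cases y; exact (key x u).trans hwu.reachable
  · cases x; exact hwv.reachable.trans (key v y)
  · cases x; cases y; exact Reachable.refl _

lemma conn_a_down (hne : u ≠ v) (hc : (fromEdgeSet ((phiA u v s : Finset (Sym2 (V ⊕ Unit))) :
      Set (Sym2 (V ⊕ Unit)))).Connected) (huv : s(u, v) ∈ s) :
    (fromEdgeSet (s : Set (Sym2 V))).Connected := by
  haveI : Nonempty V := ⟨u⟩
  refine Connected.mk fun x y => ?_
  have h := reach_transfer (K := fromEdgeSet (s : Set (Sym2 V))) (Sum.elim id fun _ => u) ?_ (hc.preconnected (Sum.inl x) (Sum.inl y))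
  · simpa using h
  · rintro (a | a) (b | b) hab <;> rw [fromEdgeSet_adj] at hab <;>
      obtain ⟨hmem, hab2⟩ := hab
    · rcases mem_phiA.1 (Finset.mem_coe.1 hmem) with ⟨f, ⟨hf, _⟩, hfe⟩ | h | h
      · have : f = s(a, b) := mE_inj (by simpa using hfe)
        subst this
        exact Adj.reachable (by rw [fromEdgeSet_adj]; exact ⟨hf, by simpa using hab2⟩)
      · exact absurd h (mE_ne_E1 s(a, b) u)
      · exact absurd h (mE_ne_E2 s(a, b) v)
    · rcases mem_phiA.1 (Finset.mem_coe.1 hmem) with ⟨f, _, hfe⟩ | h | h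
      · exfalso
        induction f using Sym2.ind with
        | _ c d => simp [Sym2.eq_iff] at hfe
      · simp only [newE₁, Sym2.eq_iff, Sum.inl.injEq, Sum.inr.injEq, reduceCtorEq,
          and_true, false_and, and_false, or_false, false_or] at h
        subst h
        exact Reachable.refl _
      · simp only [newE₂, Sym2.eq_iff, Sum.inl.injEq, Sum.inr.injEq, reduceCtorEq,
          and_true, true_and, false_and, and_false, or_false, false_or] at h
        subst h
        refine Adj.reachable ?_
        rw [fromEdgeSet_adj]
        exact ⟨by rwa [Sym2.eq_swap], hne.symm⟩
    · rcases mem_phiA.1 (Finset.mem_coe.1 hmem) with ⟨f, _, hfe⟩ | h | h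
      · exfalso
        induction f using Sym2.ind with
        | _ c d => simp [Sym2.eq_iff] at hfe
      · simp only [newE₁, Sym2.eq_iff, Sum.inl.injEq, Sum.inr.injEq, reduceCtorEq,
          and_true, true_and, false_and, and_false, or_false, false_or] at h
        subst h
        exact Reachable.refl _
      · simp only [newE₂, Sym2.eq_iff, Sum.inl.injEq, Sum.inr.injEq, reduceCtorEq,
          and_true, true_and, false_and, and_false, or_false, false_or] at h
        subst h
        exact Adj.reachable (by rw [fromEdgeSet_adj]; exact ⟨huv, hne⟩)

lemma conn_b1_up (hc : (fromEdgeSet (s : Set (Sym2 V))).Connected) :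
    (fromEdgeSet ((phiB1 u s : Finset (Sym2 (V ⊕ Unit))) : Set (Sym2 (V ⊕ Unit)))).Connected := by
  have hwu : (fromEdgeSet ((phiB1 u s : Finset (Sym2 (V ⊕ Unit))) : Set (Sym2 (V ⊕ Unit)))).Adj
      (Sum.inl u) (Sum.inr ()) := by
    rw [fromEdgeSet_adj]
    exact ⟨Finset.mem_coe.2 (mem_phiB1.2 (Or.inr rfl)), by simp⟩
  have key : ∀ x y : V, (fromEdgeSet ((phiB1 u s : Finset (Sym2 (V ⊕ Unit))) :
      Set (Sym2 (V ⊕ Unit)))).Reachable (Sum.inl x) (Sum.inl y) := by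
    intro x y
    refine reach_transfer Sum.inl ?_ (hc.preconnected x y)
    intro x y hxy
    rw [fromEdgeSet_adj] at hxy
    refine Adj.reachable ?_
    rw [fromEdgeSet_adj]
    exact ⟨Finset.mem_coe.2 (mem_phiB1.2 (Or.inl ⟨s(x, y), hxy.1, rfl⟩)), by simp [hxy.2]⟩
  refine Connected.mk ?_
  rintro (x | x) (y | y)
  · exact key x y
  · cases y; exact (key x u).trans hwu.reachable
  · cases x; exact hwu.reachable.symm.trans (key u y)
  · cases x; cases y; exact Reachable.refl _

lemma conn_b1_down (u₀ : V) (hc : (fromEdgeSet ((phiB1 u₀ s : Finset (Sym2 (V ⊕ Unit))) :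
      Set (Sym2 (V ⊕ Unit)))).Connected) :
    (fromEdgeSet (s : Set (Sym2 V))).Connected := by
  haveI : Nonempty V := ⟨u₀⟩
  refine Connected.mk fun x y => ?_
  have h := reach_transfer (K := fromEdgeSet (s : Set (Sym2 V))) (Sum.elim id fun _ => u₀) ?_ (hc.preconnected (Sum.inl x) (Sum.inl y))
  · simpa using h
  · rintro (a | a) (b | b) hab <;> rw [fromEdgeSet_adj] at hab <;>
      obtain ⟨hmem, hab2⟩ := hab
    · rcases mem_phiB1.1 (Finset.mem_coe.1 hmem) with ⟨f, hf, hfe⟩ | h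
      · have : f = s(a, b) := mE_inj (by simpa using hfe)
        subst this
        exact Adj.reachable (by rw [fromEdgeSet_adj]; exact ⟨hf, by simpa using hab2⟩)
      · exact absurd h (mE_ne_E1 s(a, b) u₀)
    · rcases mem_phiB1.1 (Finset.mem_coe.1 hmem) with ⟨f, _, hfe⟩ | h
      · exfalso
        induction f using Sym2.ind with
        | _ c d => simp [Sym2.eq_iff] at hfe
      · simp only [newE₁, Sym2.eq_iff, Sum.inl.injEq, Sum.inr.injEq, reduceCtorEq,
          and_true, true_and, false_and, and_false, or_false, false_or] at h
        subst h
        exact Reachable.refl _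
    · rcases mem_phiB1.1 (Finset.mem_coe.1 hmem) with ⟨f, _, hfe⟩ | h
      · exfalso
        induction f using Sym2.ind with
        | _ c d => simp [Sym2.eq_iff] at hfe
      · simp only [newE₁, Sym2.eq_iff, Sum.inl.injEq, Sum.inr.injEq, reduceCtorEq,
          and_true, true_and, false_and, and_false, or_false, false_or] at h
        subst h
        exact Reachable.refl _

lemma conn_b2_up (hc : (fromEdgeSet (s : Set (Sym2 V))).Connected) :
    (fromEdgeSet ((phiB2 v s : Finset (Sym2 (V ⊕ Unit))) : Set (Sym2 (V ⊕ Unit)))).Connected := by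
  have hwv : (fromEdgeSet ((phiB2 v s : Finset (Sym2 (V ⊕ Unit))) : Set (Sym2 (V ⊕ Unit)))).Adj
      (Sum.inr ()) (Sum.inl v) := by
    rw [fromEdgeSet_adj]
    exact ⟨Finset.mem_coe.2 (mem_phiB2.2 (Or.inr rfl)), by simp⟩
  have key : ∀ x y : V, (fromEdgeSet ((phiB2 v s : Finset (Sym2 (V ⊕ Unit))) :
      Set (Sym2 (V ⊕ Unit)))).Reachable (Sum.inl x) (Sum.inl y) := by
    intro x y
    refine reach_transfer Sum.inl ?_ (hc.preconnected x y)
    intro x y hxy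
    rw [fromEdgeSet_adj] at hxy
    refine Adj.reachable ?_
    rw [fromEdgeSet_adj]
    exact ⟨Finset.mem_coe.2 (mem_phiB2.2 (Or.inl ⟨s(x, y), hxy.1, rfl⟩)), by simp [hxy.2]⟩
  refine Connected.mk ?_
  rintro (x | x) (y | y)
  · exact key x y
  · cases y; exact (key x v).trans hwv.reachable.symm
  · cases x; exact hwv.reachable.trans (key v y)
  · cases x; cases y; exact Reachable.refl _

lemma conn_b2_down (v₀ : V) (hc : (fromEdgeSet ((phiB2 v₀ s : Finset (Sym2 (V ⊕ Unit))) :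
      Set (Sym2 (V ⊕ Unit)))).Connected) :
    (fromEdgeSet (s : Set (Sym2 V))).Connected := by
  haveI : Nonempty V := ⟨v₀⟩
  refine Connected.mk fun x y => ?_
  have h := reach_transfer (K := fromEdgeSet (s : Set (Sym2 V))) (Sum.elim id fun _ => v₀) ?_ (hc.preconnected (Sum.inl x) (Sum.inl y))
  · simpa using h
  · rintro (a | a) (b | b) hab <;> rw [fromEdgeSet_adj] at hab <;>
      obtain ⟨hmem, hab2⟩ := hab
    · rcases mem_phiB2.1 (Finset.mem_coe.1 hmem) with ⟨f, hf, hfe⟩ | h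
      · have : f = s(a, b) := mE_inj (by simpa using hfe)
        subst this
        exact Adj.reachable (by rw [fromEdgeSet_adj]; exact ⟨hf, by simpa using hab2⟩)
      · exact absurd h (mE_ne_E2 s(a, b) v₀)
    · rcases mem_phiB2.1 (Finset.mem_coe.1 hmem) with ⟨f, _, hfe⟩ | h
      · exfalso
        induction f using Sym2.ind with
        | _ c d => simp [Sym2.eq_iff] at hfe
      · simp only [newE₂, Sym2.eq_iff, Sum.inl.injEq, Sum.inr.injEq, reduceCtorEq,
          and_true, true_and, false_and, and_false, or_false, false_or] at h
        subst h
        exact Reachable.refl _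
    · rcases mem_phiB2.1 (Finset.mem_coe.1 hmem) with ⟨f, _, hfe⟩ | h
      · exfalso
        induction f using Sym2.ind with
        | _ c d => simp [Sym2.eq_iff] at hfe
      · simp only [newE₂, Sym2.eq_iff, Sum.inl.injEq, Sum.inr.injEq, reduceCtorEq,
          and_true, true_and, false_and, and_false, or_false, false_or] at h
        subst h
        exact Reachable.refl _

end Conn


/-- The edge sets of the spanning trees of `G` (a spanning subgraph is determined by its edge
set; it is a spanning tree iff it is connected and acyclic). -/
noncomputable def spanningTreeSets (G : SimpleGraph V) [Fintype V] [DecidableEq V] :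
    Finset (Finset (Sym2 V)) :=
  Finset.univ.filter fun s => (s : Set (Sym2 V)) ⊆ G.edgeSet ∧
    (fromEdgeSet (s : Set (Sym2 V))).IsTree

lemma mem_ST {W : Type*} [Fintype W] [DecidableEq W] (H : SimpleGraph W)
    (t : Finset (Sym2 W)) :
    t ∈ spanningTreeSets H ↔ (t : Set (Sym2 W)) ⊆ H.edgeSet ∧
      (fromEdgeSet (t : Set (Sym2 W))).IsTree := by
  simp [spanningTreeSets]

lemma edgeFinset_fromEdgeSet {W : Type*} [Fintype W] (t : Finset (Sym2 W))
    (h : ∀ f ∈ t, ¬ f.IsDiag) [Fintype (fromEdgeSet (t : Set (Sym2 W))).edgeSet] :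
    (fromEdgeSet (t : Set (Sym2 W))).edgeFinset = t := by
  ext g
  rw [mem_edgeFinset, edgeSet_fromEdgeSet]
  constructor
  · rintro ⟨hg, -⟩; exact hg
  · intro hg; exact ⟨hg, h g hg⟩

/-- The first Symanzik polynomial `Ψ_G = Σ_T Π_{f ∉ T} x_f`, the sum over all spanning trees
`T` of `G` of the product of the variables of the edges not in `T`. -/
noncomputable def firstSymanzik (G : SimpleGraph V) [Fintype V] [DecidableEq V] :
    MvPolynomial (Sym2 V) ℤ :=
  ∑ s ∈ spanningTreeSets G, ∏ f ∈ G.edgeSet.toFinset \ s, X f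


lemma tree_iff_of_subset {W : Type*} [Fintype W] (H : SimpleGraph W) (t : Finset (Sym2 W))
    (h : (t : Set (Sym2 W)) ⊆ H.edgeSet) :
    (fromEdgeSet (t : Set (Sym2 W))).IsTree ↔
      (fromEdgeSet (t : Set (Sym2 W))).Connected ∧ t.card + 1 = Fintype.card W := by
  haveI : Fintype (fromEdgeSet (t : Set (Sym2 W))).edgeSet := Fintype.ofFinite _
  rw [isTree_iff_card,
    edgeFinset_fromEdgeSet t (fun f hf => H.not_isDiag_of_mem_edgeSet (h hf))]

section Cards

variable {u v : V} {s : Finset (Sym2 V)}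

lemma disj_image_E12 :
    Disjoint ((s.erase s(u, v)).image (Sym2.map Sum.inl)) ({newE₁ u, newE₂ v} :
      Finset (Sym2 (V ⊕ Unit))) := by
  simp only [Finset.disjoint_left, Finset.mem_image, Finset.mem_insert, Finset.mem_singleton]
  rintro g ⟨f, _, rfl⟩ (h | h)
  exacts [mE_ne_E1 f u h, mE_ne_E2 f v h]

lemma card_phiA (hne : u ≠ v) (huv : s(u, v) ∈ s) : (phiA u v s).card = s.card + 1 := by
  rw [phiA, Finset.card_union_of_disjoint disj_image_E12,
    Finset.card_image_of_injective _ mE_inj, Finset.card_erase_of_mem huv]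
  have h1 : 1 ≤ s.card := Finset.card_pos.2 ⟨_, huv⟩
  have h2 : ({newE₁ u, newE₂ v} : Finset (Sym2 (V ⊕ Unit))).card = 2 := by
    rw [Finset.card_insert_of_notMem (by simpa using E1_ne_E2 hne), Finset.card_singleton]
  omega

lemma card_phiB1 : (phiB1 u s).card = s.card + 1 := by
  rw [phiB1, Finset.card_union_of_disjoint, Finset.card_image_of_injective _ mE_inj,
    Finset.card_singleton]
  simp only [Finset.disjoint_left, Finset.mem_image, Finset.mem_singleton]
  rintro g ⟨f, _, rfl⟩ h
  exact mE_ne_E1 f u h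

lemma card_phiB2 : (phiB2 v s).card = s.card + 1 := by
  rw [phiB2, Finset.card_union_of_disjoint, Finset.card_image_of_injective _ mE_inj,
    Finset.card_singleton]
  simp only [Finset.disjoint_left, Finset.mem_image, Finset.mem_singleton]
  rintro g ⟨f, _, rfl⟩ h
  exact mE_ne_E2 f v h

lemma mE_mem_phiA {f : Sym2 V} (hf : f ≠ s(u, v)) :
    Sym2.map Sum.inl f ∈ phiA u v s ↔ f ∈ s := by
  rw [mem_phiA]
  constructor
  · rintro (⟨f', ⟨hf', _⟩, he⟩ | h | h)
    · rwa [← mE_inj he]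
    · exact absurd h (mE_ne_E1 f u)
    · exact absurd h (mE_ne_E2 f v)
  · intro h
    exact Or.inl ⟨f, ⟨h, hf⟩, rfl⟩

lemma mE_mem_phiB1 {f : Sym2 V} : Sym2.map Sum.inl f ∈ phiB1 u s ↔ f ∈ s := by
  rw [mem_phiB1]
  constructor
  · rintro (⟨f', hf', he⟩ | h)
    · rwa [← mE_inj he]
    · exact absurd h (mE_ne_E1 f u)
  · intro h
    exact Or.inl ⟨f, h, rfl⟩

lemma mE_mem_phiB2 {f : Sym2 V} : Sym2.map Sum.inl f ∈ phiB2 v s ↔ f ∈ s := by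
  rw [mem_phiB2]
  constructor
  · rintro (⟨f', hf', he⟩ | h)
    · rwa [← mE_inj he]
    · exact absurd h (mE_ne_E2 f v)
  · intro h
    exact Or.inl ⟨f, h, rfl⟩

lemma E1_mem_phiA : newE₁ u ∈ phiA u v s := mem_phiA.2 (Or.inr (Or.inl rfl))

lemma E2_mem_phiA : newE₂ v ∈ phiA u v s := mem_phiA.2 (Or.inr (Or.inr rfl))

lemma E1_mem_phiB1 : newE₁ u ∈ phiB1 u s := mem_phiB1.2 (Or.inr rfl)

lemma E2_mem_phiB2 : newE₂ v ∈ phiB2 v s := mem_phiB2.2 (Or.inr rfl)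

lemma E2_not_mem_phiB1 (hne : u ≠ v) : newE₂ v ∉ phiB1 u s := by
  rw [mem_phiB1]
  rintro (⟨f, _, he⟩ | h)
  · exact mE_ne_E2 f v he
  · exact E1_ne_E2 hne h.symm

lemma E1_not_mem_phiB2 (hne : u ≠ v) : newE₁ u ∉ phiB2 v s := by
  rw [mem_phiB2]
  rintro (⟨f, _, he⟩ | h)
  · exact mE_ne_E1 f u he
  · exact E1_ne_E2 hne h

lemma phiA_inj {t : Finset (Sym2 V)} (hs : s(u, v) ∈ s) (ht : s(u, v) ∈ t)
    (h : phiA u v s = phiA u v t) : s = t := by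
  ext f
  by_cases hf : f = s(u, v)
  · subst hf; simp [hs, ht]
  · rw [← mE_mem_phiA (s := s) hf, ← mE_mem_phiA (s := t) hf, h]

lemma phiB1_inj {t : Finset (Sym2 V)} (h : phiB1 u s = phiB1 u t) : s = t := by
  ext f
  rw [← mE_mem_phiB1 (s := s) (u := u), ← mE_mem_phiB1 (s := t) (u := u), h]

lemma phiB2_inj {t : Finset (Sym2 V)} (h : phiB2 v s = phiB2 v t) : s = t := by
  ext f
  rw [← mE_mem_phiB2 (s := s) (v := v), ← mE_mem_phiB2 (s := t) (v := v), h]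

end Cards


section Decomp

variable [Fintype V] [DecidableEq V] {G : SimpleGraph V} {u v : V}

lemma mE_mem_edgeSet_subdiv {f : Sym2 V} (hf : f ∈ G.edgeSet) (hne : f ≠ s(u, v)) :
    Sym2.map Sum.inl f ∈ (subdiv G u v).edgeSet := by
  rw [edgeSet_subdiv]
  exact Set.mem_union_left _ ⟨f, ⟨hf, hne⟩, rfl⟩

lemma E1_mem_edgeSet_subdiv : newE₁ u ∈ (subdiv G u v).edgeSet := by
  rw [edgeSet_subdiv]
  exact Set.mem_union_right _ (Set.mem_insert _ _)

lemma E2_mem_edgeSet_subdiv : newE₂ v ∈ (subdiv G u v).edgeSet := by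
  rw [edgeSet_subdiv]
  exact Set.mem_union_right _ (Set.mem_insert_of_mem _ rfl)

lemma card_sum_unit : Fintype.card (V ⊕ Unit) = Fintype.card V + 1 := by
  simp

lemma phiA_mem_ST (he : G.Adj u v) {s : Finset (Sym2 V)}
    (hs : s ∈ spanningTreeSets G) (huv : s(u, v) ∈ s) :
    phiA u v s ∈ spanningTreeSets (subdiv G u v) := by
  obtain ⟨hsub, htree⟩ := (mem_ST G s).1 hs
  rw [mem_ST]
  have hsub' : ((phiA u v s : Finset (Sym2 (V ⊕ Unit))) : Set (Sym2 (V ⊕ Unit))) ⊆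
      (subdiv G u v).edgeSet := by
    intro g hg
    rcases mem_phiA.1 (Finset.mem_coe.1 hg) with ⟨f, ⟨hf, hfe⟩, rfl⟩ | rfl | rfl
    · exact mE_mem_edgeSet_subdiv (hsub hf) hfe
    · exact E1_mem_edgeSet_subdiv
    · exact E2_mem_edgeSet_subdiv
  refine ⟨hsub', ?_⟩
  obtain ⟨hconn, hcard⟩ := (tree_iff_of_subset G s hsub).1 htree
  rw [tree_iff_of_subset _ _ hsub']
  refine ⟨conn_a_up huv hconn, ?_⟩
  rw [card_phiA he.ne huv, card_sum_unit]
  omega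

lemma phiB1_mem_ST {s : Finset (Sym2 V)}
    (hs : s ∈ spanningTreeSets G) (huv : s(u, v) ∉ s) :
    phiB1 u s ∈ spanningTreeSets (subdiv G u v) := by
  obtain ⟨hsub, htree⟩ := (mem_ST G s).1 hs
  rw [mem_ST]
  have hsub' : ((phiB1 u s : Finset (Sym2 (V ⊕ Unit))) : Set (Sym2 (V ⊕ Unit))) ⊆
      (subdiv G u v).edgeSet := by
    intro g hg
    rcases mem_phiB1.1 (Finset.mem_coe.1 hg) with ⟨f, hf, rfl⟩ | rfl
    · exact mE_mem_edgeSet_subdiv (hsub hf) (fun h => huv (h ▸ hf))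
    · exact E1_mem_edgeSet_subdiv
  refine ⟨hsub', ?_⟩
  obtain ⟨hconn, hcard⟩ := (tree_iff_of_subset G s hsub).1 htree
  rw [tree_iff_of_subset _ _ hsub']
  refine ⟨conn_b1_up hconn, ?_⟩
  rw [card_phiB1, card_sum_unit]
  omega

lemma phiB2_mem_ST {s : Finset (Sym2 V)}
    (hs : s ∈ spanningTreeSets G) (huv : s(u, v) ∉ s) :
    phiB2 v s ∈ spanningTreeSets (subdiv G u v) := by
  obtain ⟨hsub, htree⟩ := (mem_ST G s).1 hs
  rw [mem_ST]
  have hsub' : ((phiB2 v s : Finset (Sym2 (V ⊕ Unit))) : Set (Sym2 (V ⊕ Unit))) ⊆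
      (subdiv G u v).edgeSet := by
    intro g hg
    rcases mem_phiB2.1 (Finset.mem_coe.1 hg) with ⟨f, hf, rfl⟩ | rfl
    · exact mE_mem_edgeSet_subdiv (hsub hf) (fun h => huv (h ▸ hf))
    · exact E2_mem_edgeSet_subdiv
  refine ⟨hsub', ?_⟩
  obtain ⟨hconn, hcard⟩ := (tree_iff_of_subset G s hsub).1 htree
  rw [tree_iff_of_subset _ _ hsub']
  refine ⟨conn_b2_up hconn, ?_⟩
  rw [card_phiB2, card_sum_unit]
  omega

lemma mE_uv_not_mem_subdiv : Sym2.map Sum.inl s(u, v) ∉ (subdiv G u v).edgeSet := by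
  rw [Sym2.map_pair_eq, mem_edgeSet, subdiv_adj_inl_inl]
  rintro ⟨-, h⟩
  exact h rfl

lemma ST_subdiv (G : SimpleGraph V) (u v : V) (he : G.Adj u v) :
    spanningTreeSets (subdiv G u v) =
      ((spanningTreeSets G).filter fun s => s(u, v) ∈ s).image (phiA u v) ∪
      (((spanningTreeSets G).filter fun s => s(u, v) ∉ s).image (phiB1 u) ∪
       ((spanningTreeSets G).filter fun s => s(u, v) ∉ s).image (phiB2 v)) := by
  ext s'
  constructor
  · intro h
    obtain ⟨hsub, htree⟩ := (mem_ST _ s').1 h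
    obtain ⟨hconn, hcard⟩ := (tree_iff_of_subset _ s' hsub).1 htree
    rw [card_sum_unit] at hcard
    set s₀ : Finset (Sym2 V) :=
      G.edgeSet.toFinset.filter (fun f => Sym2.map Sum.inl f ∈ s') with hs₀
    have hs₀sub : (s₀ : Set (Sym2 V)) ⊆ G.edgeSet := by
      intro f hf
      have := Finset.mem_coe.1 hf
      rw [hs₀, Finset.mem_filter, Set.mem_toFinset] at this
      exact this.1
    have he_not : s(u, v) ∉ s₀ := by
      rw [hs₀, Finset.mem_filter]
      rintro ⟨-, hmem⟩
      exact mE_uv_not_mem_subdiv (hsub hmem)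
    have hmem_cases : ∀ g ∈ s',
        (∃ f ∈ s₀, Sym2.map Sum.inl f = g) ∨ g = newE₁ u ∨ g = newE₂ v := by
      intro g hg
      have hg' := hsub hg
      rw [edgeSet_subdiv] at hg'
      rcases hg' with ⟨f, ⟨hf, hfe⟩, rfl⟩ | hg'
      · exact Or.inl ⟨f, by
          rw [hs₀, Finset.mem_filter, Set.mem_toFinset]; exact ⟨hf, hg⟩, rfl⟩
      · exact Or.inr hg'
    by_cases h1 : newE₁ u ∈ s' <;> by_cases h2 : newE₂ v ∈ s'
    · -- both new edges present: s' = phiA u v (insert e s₀)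
      have hphi : phiA u v (insert s(u, v) s₀) = s' := by
        ext g
        rw [mem_phiA]
        constructor
        · rintro (⟨f, ⟨hf, hfe⟩, rfl⟩ | rfl | rfl)
          · have : f ∈ s₀ := by
              rcases Finset.mem_insert.1 hf with h | h
              · exact absurd h hfe
              · exact h
            rw [hs₀, Finset.mem_filter] at this
            exact this.2
          · exact h1
          · exact h2
        · intro hg
          rcases hmem_cases g hg with ⟨f, hf, rfl⟩ | rfl | rfl
          · exact Or.inl ⟨f, ⟨Finset.mem_insert_of_mem hf,
              fun hc => he_not (hc ▸ hf)⟩, rfl⟩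
          · exact Or.inr (Or.inl rfl)
          · exact Or.inr (Or.inr rfl)
      refine Finset.mem_union_left _ (Finset.mem_image.2 ⟨insert s(u, v) s₀, ?_, hphi⟩)
      rw [Finset.mem_filter, mem_ST]
      have hsubI : ((insert s(u, v) s₀ : Finset (Sym2 V)) : Set (Sym2 V)) ⊆ G.edgeSet := by
        intro f hf
        rcases Finset.mem_insert.1 (Finset.mem_coe.1 hf) with rfl | hf
        · exact he
        · exact hs₀sub hf
      have hKconn : (fromEdgeSet ((insert s(u, v) s₀ : Finset (Sym2 V)) :
          Set (Sym2 V))).Connected :=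
        conn_a_down he.ne (by rw [hphi]; exact hconn) (Finset.mem_insert_self _ _)
      have hKcard : (phiA u v (insert s(u, v) s₀)).card = s'.card := by rw [hphi]
      rw [card_phiA he.ne (Finset.mem_insert_self _ _)] at hKcard
      refine ⟨⟨hsubI, ?_⟩, Finset.mem_insert_self _ _⟩
      rw [tree_iff_of_subset _ _ hsubI]
      exact ⟨hKconn, by omega⟩
    · -- only e₁ present
      have hphi : phiB1 u s₀ = s' := by
        ext g
        rw [mem_phiB1]
        constructor
        · rintro (⟨f, hf, rfl⟩ | rfl)
          · rw [hs₀, Finset.mem_filter] at hf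
            exact hf.2
          · exact h1
        · intro hg
          rcases hmem_cases g hg with ⟨f, hf, rfl⟩ | rfl | rfl
          · exact Or.inl ⟨f, hf, rfl⟩
          · exact Or.inr rfl
          · exact absurd hg h2
      refine Finset.mem_union_right _ (Finset.mem_union_left _
        (Finset.mem_image.2 ⟨s₀, ?_, hphi⟩))
      rw [Finset.mem_filter, mem_ST]
      have hKconn : (fromEdgeSet ((s₀ : Finset (Sym2 V)) : Set (Sym2 V))).Connected :=
        conn_b1_down u (by rw [hphi]; exact hconn)
      have hKcard : (phiB1 u s₀).card = s'.card := by rw [hphi]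
      rw [card_phiB1] at hKcard
      refine ⟨⟨hs₀sub, ?_⟩, he_not⟩
      rw [tree_iff_of_subset _ _ hs₀sub]
      exact ⟨hKconn, by omega⟩
    · -- only e₂ present
      have hphi : phiB2 v s₀ = s' := by
        ext g
        rw [mem_phiB2]
        constructor
        · rintro (⟨f, hf, rfl⟩ | rfl)
          · rw [hs₀, Finset.mem_filter] at hf
            exact hf.2
          · exact h2
        · intro hg
          rcases hmem_cases g hg with ⟨f, hf, rfl⟩ | rfl | rfl
          · exact Or.inl ⟨f, hf, rfl⟩
          · exact absurd hg h1
          · exact Or.inr rfl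
      refine Finset.mem_union_right _ (Finset.mem_union_right _
        (Finset.mem_image.2 ⟨s₀, ?_, hphi⟩))
      rw [Finset.mem_filter, mem_ST]
      have hKconn : (fromEdgeSet ((s₀ : Finset (Sym2 V)) : Set (Sym2 V))).Connected :=
        conn_b2_down v (by rw [hphi]; exact hconn)
      have hKcard : (phiB2 v s₀).card = s'.card := by rw [hphi]
      rw [card_phiB2] at hKcard
      refine ⟨⟨hs₀sub, ?_⟩, he_not⟩
      rw [tree_iff_of_subset _ _ hs₀sub]
      exact ⟨hKconn, by omega⟩
    · -- neither: contradiction with connectivity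
      exfalso
      obtain ⟨w⟩ := hconn.preconnected (Sum.inr ()) (Sum.inl u)
      cases w with
      | cons hadj p =>
        rename_i z _
        rw [fromEdgeSet_adj] at hadj
        obtain ⟨hmem, -⟩ := hadj
        rcases hmem_cases _ (Finset.mem_coe.1 hmem) with ⟨f, _, hfe⟩ | hE | hE
        · induction f using Sym2.ind with
          | _ a b =>
            rw [Sym2.map_pair_eq] at hfe
            rw [Sym2.eq_iff] at hfe
            rcases hfe with ⟨hc, -⟩ | ⟨-, hc⟩ <;> exact absurd hc (by simp)
        · exact h1 (hE ▸ Finset.mem_coe.1 hmem)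
        · exact h2 (hE ▸ Finset.mem_coe.1 hmem)
  · intro h
    rcases Finset.mem_union.1 h with h | h
    · obtain ⟨s, hs, rfl⟩ := Finset.mem_image.1 h
      rw [Finset.mem_filter] at hs
      exact phiA_mem_ST he hs.1 hs.2
    · rcases Finset.mem_union.1 h with h | h
      · obtain ⟨s, hs, rfl⟩ := Finset.mem_image.1 h
        rw [Finset.mem_filter] at hs
        exact phiB1_mem_ST hs.1 hs.2
      · obtain ⟨s, hs, rfl⟩ := Finset.mem_image.1 h
        rw [Finset.mem_filter] at hs
        exact phiB2_mem_ST hs.1 hs.2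

end Decomp


section Sdiff

variable [Fintype V] [DecidableEq V] {G : SimpleGraph V} {u v : V}

lemma edgeFinset_subdiv :
    (subdiv G u v).edgeSet.toFinset = phiA u v G.edgeSet.toFinset := by
  ext g
  rw [Set.mem_toFinset, edgeSet_subdiv, mem_phiA]
  simp only [Set.mem_union, Set.mem_image, Set.mem_diff, Set.mem_singleton_iff,
    Set.mem_insert_iff, Set.mem_toFinset]

lemma sdiff_phiA {s : Finset (Sym2 V)} (huv : s(u, v) ∈ s) :
    phiA u v G.edgeSet.toFinset \ phiA u v s =
      (G.edgeSet.toFinset \ s).image (Sym2.map Sum.inl) := by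
  ext g
  simp only [Finset.mem_sdiff, Finset.mem_image]
  constructor
  · rintro ⟨hg1, hg2⟩
    rcases mem_phiA.1 hg1 with ⟨f, ⟨hf, hfe⟩, rfl⟩ | rfl | rfl
    · exact ⟨f, ⟨hf, fun hc => hg2 ((mE_mem_phiA hfe).2 hc)⟩, rfl⟩
    · exact absurd E1_mem_phiA hg2
    · exact absurd E2_mem_phiA hg2
  · rintro ⟨f, ⟨hfD, hfs⟩, rfl⟩
    have hfe : f ≠ s(u, v) := fun hc => hfs (hc ▸ huv)
    exact ⟨(mE_mem_phiA hfe).2 hfD, fun hc => hfs ((mE_mem_phiA hfe).1 hc)⟩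

lemma sdiff_phiB1 (hne : u ≠ v) {s : Finset (Sym2 V)} :
    phiA u v G.edgeSet.toFinset \ phiB1 u s =
      ((G.edgeSet.toFinset \ s).erase s(u, v)).image (Sym2.map Sum.inl) ∪ {newE₂ v} := by
  ext g
  simp only [Finset.mem_sdiff, Finset.mem_union, Finset.mem_image, Finset.mem_singleton]
  constructor
  · rintro ⟨hg1, hg2⟩
    rcases mem_phiA.1 hg1 with ⟨f, ⟨hf, hfe⟩, rfl⟩ | rfl | rfl
    · exact Or.inl ⟨f, Finset.mem_erase.2 ⟨hfe, Finset.mem_sdiff.2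
        ⟨hf, fun hc => hg2 (mE_mem_phiB1.2 hc)⟩⟩, rfl⟩
    · exact absurd E1_mem_phiB1 hg2
    · exact Or.inr rfl
  · rintro (⟨f, hf, rfl⟩ | rfl)
    · obtain ⟨hfe, hfd⟩ := Finset.mem_erase.1 hf
      obtain ⟨hfD, hfs⟩ := Finset.mem_sdiff.1 hfd
      exact ⟨(mE_mem_phiA hfe).2 hfD, fun hc => hfs (mE_mem_phiB1.1 hc)⟩
    · exact ⟨E2_mem_phiA, E2_not_mem_phiB1 hne⟩

lemma sdiff_phiB2 (hne : u ≠ v) {s : Finset (Sym2 V)} :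
    phiA u v G.edgeSet.toFinset \ phiB2 v s =
      ((G.edgeSet.toFinset \ s).erase s(u, v)).image (Sym2.map Sum.inl) ∪ {newE₁ u} := by
  ext g
  simp only [Finset.mem_sdiff, Finset.mem_union, Finset.mem_image, Finset.mem_singleton]
  constructor
  · rintro ⟨hg1, hg2⟩
    rcases mem_phiA.1 hg1 with ⟨f, ⟨hf, hfe⟩, rfl⟩ | rfl | rfl
    · exact Or.inl ⟨f, Finset.mem_erase.2 ⟨hfe, Finset.mem_sdiff.2
        ⟨hf, fun hc => hg2 (mE_mem_phiB2.2 hc)⟩⟩, rfl⟩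
    · exact Or.inr rfl
    · exact absurd E2_mem_phiB2 hg2
  · rintro (⟨f, hf, rfl⟩ | rfl)
    · obtain ⟨hfe, hfd⟩ := Finset.mem_erase.1 hf
      obtain ⟨hfD, hfs⟩ := Finset.mem_sdiff.1 hfd
      exact ⟨(mE_mem_phiA hfe).2 hfD, fun hc => hfs (mE_mem_phiB2.1 hc)⟩
    · exact ⟨E1_mem_phiA, E1_not_mem_phiB2 hne⟩

lemma disj_image_single1 {t : Finset (Sym2 V)} :
    Disjoint (t.image (Sym2.map Sum.inl)) ({newE₁ u} : Finset (Sym2 (V ⊕ Unit))) := by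
  simp only [Finset.disjoint_left, Finset.mem_image, Finset.mem_singleton]
  rintro g ⟨f, _, rfl⟩ h
  exact mE_ne_E1 f u h

lemma disj_image_single2 {t : Finset (Sym2 V)} :
    Disjoint (t.image (Sym2.map Sum.inl)) ({newE₂ v} : Finset (Sym2 (V ⊕ Unit))) := by
  simp only [Finset.disjoint_left, Finset.mem_image, Finset.mem_singleton]
  rintro g ⟨f, _, rfl⟩ h
  exact mE_ne_E2 f v h

end Sdiff

/-- The first Symanzik polynomial of the subdivision of `G` at `e = {u,v}` is obtained from the
first Symanzik polynomial of `G` by substituting `x_{e₁} + x_{e₂}` for `x_e` (and renaming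
`x_f` to `x_f` for every other edge `f`). -/
theorem subdivision_firstSymanzik [Fintype V] [DecidableEq V]
    (G : SimpleGraph V) (hG : G.Connected) (u v : V) (he : G.Adj u v) :
    firstSymanzik (subdiv G u v) =
      eval₂Hom (Int.castRingHom (MvPolynomial (Sym2 (V ⊕ Unit)) ℤ))
        (fun f => if f = s(u, v) then X (newE₁ u) + X (newE₂ v) else X (Sym2.map Sum.inl f))
        (firstSymanzik G) := by
  have hne := he.ne
  have heD : s(u, v) ∈ G.edgeSet.toFinset := Set.mem_toFinset.2 he
  have hdisj2 : Disjoint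
      (((spanningTreeSets G).filter fun s => s(u, v) ∉ s).image (phiB1 u))
      (((spanningTreeSets G).filter fun s => s(u, v) ∉ s).image (phiB2 v)) := by
    rw [Finset.disjoint_left]
    rintro s' hs1 hs2
    obtain ⟨s, _, rfl⟩ := Finset.mem_image.1 hs1
    obtain ⟨t, _, hts⟩ := Finset.mem_image.1 hs2
    exact E1_not_mem_phiB2 hne (hts ▸ E1_mem_phiB1)
  have hdisj1 : Disjoint
      (((spanningTreeSets G).filter fun s => s(u, v) ∈ s).image (phiA u v))
      ((((spanningTreeSets G).filter fun s => s(u, v) ∉ s).image (phiB1 u)) ∪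
       (((spanningTreeSets G).filter fun s => s(u, v) ∉ s).image (phiB2 v))) := by
    rw [Finset.disjoint_left]
    rintro s' hs1 hs2
    obtain ⟨s, _, rfl⟩ := Finset.mem_image.1 hs1
    rcases Finset.mem_union.1 hs2 with h | h
    · obtain ⟨t, _, hts⟩ := Finset.mem_image.1 h
      exact E2_not_mem_phiB1 hne (hts ▸ E2_mem_phiA)
    · obtain ⟨t, _, hts⟩ := Finset.mem_image.1 h
      exact E1_not_mem_phiB2 hne (hts ▸ E1_mem_phiA)
  rw [firstSymanzik, firstSymanzik, map_sum, ST_subdiv G u v he,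
    Finset.sum_union hdisj1, Finset.sum_union hdisj2,
    Finset.sum_image (fun x hx y hy h => phiA_inj (Finset.mem_filter.1 hx).2
      (Finset.mem_filter.1 hy).2 h),
    Finset.sum_image (fun x _ y _ h => phiB1_inj h),
    Finset.sum_image (fun x _ y _ h => phiB2_inj h)]
  simp only [map_prod, eval₂Hom_X']
  rw [← Finset.sum_filter_add_sum_filter_not (spanningTreeSets G) (fun s => s(u, v) ∈ s)]
  congr 1
  · refine Finset.sum_congr rfl fun s hs => ?_
    obtain ⟨hsST, hmem⟩ := Finset.mem_filter.1 hs
    rw [edgeFinset_subdiv, sdiff_phiA hmem,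
      Finset.prod_image (fun x _ y _ h => mE_inj h)]
    refine Finset.prod_congr rfl fun f hf => ?_
    have : f ≠ s(u, v) := fun hc => (Finset.mem_sdiff.1 hf).2 (hc ▸ hmem)
    rw [if_neg this]
  · rw [← Finset.sum_add_distrib]
    refine Finset.sum_congr rfl fun s hs => ?_
    obtain ⟨hsST, hmem⟩ := Finset.mem_filter.1 hs
    have heDs : s(u, v) ∈ G.edgeSet.toFinset \ s := Finset.mem_sdiff.2 ⟨heD, hmem⟩
    rw [edgeFinset_subdiv, sdiff_phiB1 hne, sdiff_phiB2 hne,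
      Finset.prod_union disj_image_single2, Finset.prod_union disj_image_single1,
      Finset.prod_singleton, Finset.prod_singleton,
      Finset.prod_image (fun x _ y _ h => mE_inj h),
      ← Finset.mul_prod_erase _ _ heDs, if_pos rfl]
    have hprod : (∏ f ∈ (G.edgeSet.toFinset \ s).erase s(u, v),
        if f = s(u, v) then (X (newE₁ u) + X (newE₂ v) :
          MvPolynomial (Sym2 (V ⊕ Unit)) ℤ) else X (Sym2.map Sum.inl f)) =
        ∏ f ∈ (G.edgeSet.toFinset \ s).erase s(u, v), X (Sym2.map Sum.inl f) :=
      Finset.prod_congr rfl fun f hf => if_neg (Finset.mem_erase.1 hf).1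
    rw [hprod]
    ring
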